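/- arXiv:1410.4787 — 3 statements merged into one kernel-verified Lean document; each statement's English description precedes it below -/
import Mathlib

section
/- Let Z₁,…,Z_r be n×k_i real matrices, let Z = [Z₁,…,Z_r], and let q = rank(Z). Then there exists an n×n orthogonal matrix U and q×q symmetric nonnegative definite matrices A₁,…,A_r with A₁+⋯+A_r positive definite such that for all κ₁,…,κ_r ≥ 0, I_n + Σᵢ κᵢ ZᵢZᵢ' = U · blockdiag(I_q + Σᵢ κᵢ Aᵢ, I_{n−q}) · U'. -/
open Matrix Filter

noncomputable def Vtilde {n r : ℕ} {k : Fin r → ℕ}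
    (Z : ∀ i : Fin r, Matrix (Fin n) (Fin (k i)) ℝ) (κ : Fin r → ℝ) :
    Matrix (Fin n) (Fin n) ℝ :=
  1 + ∑ i, κ i • (Z i * (Z i)ᵀ)

noncomputable def colSpaceXZ {n m r : ℕ} {k : Fin r → ℕ}
    (X : Matrix (Fin n) (Fin m) ℝ) (Z : ∀ i : Fin r, Matrix (Fin n) (Fin (k i)) ℝ) :
    Submodule ℝ (Fin n → ℝ) :=
  LinearMap.range X.mulVecLin ⊔ ⨆ i, LinearMap.range (Z i).mulVecLin

noncomputable def sXZ {n m r : ℕ} {k : Fin r → ℕ}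
    (X : Matrix (Fin n) (Fin m) ℝ) (Z : ∀ i : Fin r, Matrix (Fin n) (Fin (k i)) ℝ)
    (y : Fin n → ℝ) : ℝ :=
  let L : EuclideanSpace ℝ (Fin n) ≃ₗ[ℝ] (Fin n → ℝ) :=
    WithLp.linearEquiv 2 ℝ (Fin n → ℝ)
  let S : Submodule ℝ (EuclideanSpace ℝ (Fin n)) :=
    (colSpaceXZ X Z).map L.symm.toLinearMap
  ‖(Submodule.orthogonalProjectionOnto Sᗮ (L.symm y) : EuclideanSpace ℝ (Fin n))‖ ^ 2

noncomputable def ltilde {n m r : ℕ} {k : Fin r → ℕ}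
    (X : Matrix (Fin n) (Fin m) ℝ) (Z : ∀ i : Fin r, Matrix (Fin n) (Fin (k i)) ℝ)
    (y : Fin n → ℝ) (β : Fin m → ℝ) (κ₀ : ℝ) (κ : Fin r → ℝ) : ℝ :=
  n * Real.log κ₀ + Real.log (Vtilde Z κ).det
    + κ₀⁻¹ * ((y - X.mulVec β) ⬝ᵥ (Vtilde Z κ)⁻¹.mulVec (y - X.mulVec β))

/-- Corrected Proposition 3.2 of Demidenko–Massam (1999): block representation of the
scaled covariance matrix. -/
theorem scaled_covariance_block_representation
    (n r : ℕ) (k : Fin r → ℕ) (Z : ∀ i : Fin r, Matrix (Fin n) (Fin (k i)) ℝ)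
    (q : ℕ)
    (hq : q = Matrix.rank (Matrix.of fun x (p : (i : Fin r) × Fin (k i)) => Z p.1 x p.2)) :
    ∃ (U : Matrix (Fin n) (Fin q ⊕ Fin (n - q)) ℝ)
      (A : Fin r → Matrix (Fin q) (Fin q) ℝ),
      U * Uᵀ = 1 ∧ Uᵀ * U = 1 ∧
      (∀ i, (A i).IsSymm ∧ (A i).PosSemidef) ∧ (∑ i, A i).PosDef ∧
      ∀ κ : Fin r → ℝ, (∀ i, 0 ≤ κ i) →
        Vtilde Z κ =
          U * Matrix.fromBlocks (1 + ∑ i, κ i • A i) 0 0 (1 : Matrix (Fin (n - q)) (Fin (n - q)) ℝ) * Uᵀ := by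
  classical
  set Zb : Matrix (Fin n) ((i : Fin r) × Fin (k i)) ℝ :=
    Matrix.of fun x (p : (i : Fin r) × Fin (k i)) => Z p.1 x p.2 with hZbdef
  have hqn : q ≤ n := by
    rw [hq]
    exact Zb.rank_le_card_height.trans (by simp)
  set e : EuclideanSpace ℝ (Fin n) ≃ₗ[ℝ] (Fin n → ℝ) :=
    WithLp.linearEquiv 2 ℝ (Fin n → ℝ) with he
  set S : Submodule ℝ (EuclideanSpace ℝ (Fin n)) :=
    (LinearMap.range Zb.mulVecLin).map e.symm.toLinearMap with hSdef
  have hmemS : ∀ x : EuclideanSpace ℝ (Fin n), x ∈ S ↔ ∃ c, Zb *ᵥ c = e x := by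
    intro x
    rw [hSdef]
    rw [show e.symm.toLinearMap = (e.symm : (Fin n → ℝ) →ₗ[ℝ] EuclideanSpace ℝ (Fin n)) from rfl,
      Submodule.mem_map_equiv]
    simp [Matrix.mulVecLin_apply]
  have hfinS : Module.finrank ℝ S = q := by
    rw [hSdef]
    rw [show e.symm.toLinearMap = (e.symm : (Fin n → ℝ) →ₗ[ℝ] EuclideanSpace ℝ (Fin n)) from rfl,
      LinearEquiv.finrank_map_eq]
    rw [hq]
    rfl
  have hfinSp : Module.finrank ℝ (Sᗮ : Submodule ℝ (EuclideanSpace ℝ (Fin n))) = n - q := by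
    have h := Submodule.finrank_add_finrank_orthogonal (K := S)
    rw [hfinS, finrank_euclideanSpace_fin] at h
    omega
  let b₁ : OrthonormalBasis (Fin q) ℝ S := (stdOrthonormalBasis ℝ S).reindex (finCongr hfinS)
  let b₂ : OrthonormalBasis (Fin (n - q)) ℝ (↥Sᗮ) :=
    (stdOrthonormalBasis ℝ (↥Sᗮ)).reindex (finCongr hfinSp)
  let v : Fin q ⊕ Fin (n - q) → EuclideanSpace ℝ (Fin n) :=
    Sum.elim (fun j => (b₁ j : EuclideanSpace ℝ (Fin n)))
      (fun j => (b₂ j : EuclideanSpace ℝ (Fin n)))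
  have hv₁S : ∀ j, v (Sum.inl j) ∈ S := fun j => (b₁ j).2
  have hv₂S : ∀ j, v (Sum.inr j) ∈ Sᗮ := fun j => (b₂ j).2
  have hv : Orthonormal ℝ v := by
    rw [orthonormal_iff_ite]
    rintro (a | a) (b | b)
    · have h := orthonormal_iff_ite.mp b₁.orthonormal a b
      rw [Submodule.coe_inner] at h
      simpa [v] using h
    · rw [if_neg (by simp)]
      exact Submodule.inner_right_of_mem_orthogonal (hv₁S a) (hv₂S b)
    · rw [if_neg (by simp)]
      exact Submodule.inner_left_of_mem_orthogonal (hv₁S b) (hv₂S a)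
    · have h := orthonormal_iff_ite.mp b₂.orthonormal a b
      rw [Submodule.coe_inner] at h
      simpa [v] using h
  set U : Matrix (Fin n) (Fin q ⊕ Fin (n - q)) ℝ := Matrix.of fun x j => v j x with hUdef
  have hUtU : Uᵀ * U = 1 := by
    ext j j'
    have h := orthonormal_iff_ite.mp hv j j'
    rw [PiLp.inner_apply] at h
    simpa [Matrix.mul_apply, Matrix.one_apply, hUdef, RCLike.inner_apply, conj_trivial, mul_comm ((v j').ofLp _)] using h
  have hUUt : U * Uᵀ = 1 := by
    have hcard : q + (n - q) = n := by omega
    exact (Matrix.mul_eq_one_comm_of_equiv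
      ((finSumFinEquiv.trans (finCongr hcard)).symm)).mpr hUtU
  set C : Matrix (Fin n) (Fin q) ℝ := U.submatrix id Sum.inl with hCdef
  set A : Fin r → Matrix (Fin q) (Fin q) ℝ := fun i => Cᵀ * (Z i * (Z i)ᵀ) * C with hAdef
  -- key entry lemma
  have entry : ∀ (N : Matrix (Fin n) (Fin n) ℝ) (j j' : Fin q ⊕ Fin (n - q)),
      (Uᵀ * N * U) j j' = v j ⬝ᵥ (N *ᵥ v j') := by
    intro N j j'
    simp only [Matrix.mul_apply, Matrix.transpose_apply, Matrix.mulVec, dotProduct,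
      Finset.sum_mul, Finset.mul_sum, hUdef, Matrix.of_apply]
    rw [Finset.sum_comm]
    exact Finset.sum_congr rfl fun x _ => Finset.sum_congr rfl fun y _ => by ring
  -- columns of Z i kill vectors in Sᗮ
  have hZtw : ∀ (i : Fin r) (w : EuclideanSpace ℝ (Fin n)), w ∈ Sᗮ → (Z i)ᵀ *ᵥ w = 0 := by
    intro i w hw
    funext a
    simp only [Pi.zero_apply]
    have hcol : e.symm (Zb *ᵥ Pi.single ⟨i, a⟩ 1) ∈ S :=
      (hmemS _).mpr ⟨Pi.single ⟨i, a⟩ 1, by simp⟩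
    have h0 : (inner ℝ (e.symm (Zb *ᵥ Pi.single ⟨i, a⟩ 1)) w : ℝ) = 0 :=
      Submodule.inner_right_of_mem_orthogonal hcol hw
    rw [PiLp.inner_apply] at h0
    simp only [RCLike.inner_apply, conj_trivial] at h0
    have hcolval : ∀ x, (e.symm (Zb *ᵥ Pi.single (⟨i, a⟩ : (i : Fin r) × Fin (k i)) 1)) x
        = Z i x a := by
      intro x
      show (Zb *ᵥ Pi.single (⟨i, a⟩ : (i : Fin r) × Fin (k i)) 1) x = Z i x a
      rw [Matrix.mulVec_single]
      simp [hZbdef]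
    rw [show ((Z i)ᵀ *ᵥ (w : EuclideanSpace ℝ (Fin n))) a = ∑ x, Z i x a * w x by
      simp [Matrix.mulVec, dotProduct, Matrix.transpose_apply]]
    rw [← h0]
    exact Finset.sum_congr rfl fun x _ => by rw [hcolval x, mul_comm]
  have hNw : ∀ (i : Fin r) (w : EuclideanSpace ℝ (Fin n)), w ∈ Sᗮ →
      (Z i * (Z i)ᵀ) *ᵥ w = 0 := by
    intro i w hw
    rw [← Matrix.mulVec_mulVec, hZtw i w hw, Matrix.mulVec_zero]
  -- symmetry of the N's
  have hNsymm : ∀ i : Fin r, (Z i * (Z i)ᵀ)ᵀ = Z i * (Z i)ᵀ := by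
    intro i; rw [Matrix.transpose_mul, Matrix.transpose_transpose]
  -- block structure
  have hblock : ∀ i : Fin r, Uᵀ * (Z i * (Z i)ᵀ) * U
      = Matrix.fromBlocks (A i) 0 0 (0 : Matrix (Fin (n - q)) (Fin (n - q)) ℝ) := by
    intro i
    have hright : ∀ (j : Fin q ⊕ Fin (n - q)) (b : Fin (n - q)),
        (Uᵀ * (Z i * (Z i)ᵀ) * U) j (Sum.inr b) = 0 := by
      intro j b
      rw [entry, hNw i _ (hv₂S b), dotProduct_zero]
    have hleft : ∀ (a : Fin (n - q)) (j : Fin q ⊕ Fin (n - q)),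
        (Uᵀ * (Z i * (Z i)ᵀ) * U) (Sum.inr a) j = 0 := by
      intro a j
      rw [entry, Matrix.dotProduct_mulVec, ← Matrix.mulVec_transpose, hNsymm,
        hNw i _ (hv₂S a), zero_dotProduct]
    ext j j'
    rcases j with a | a <;> rcases j' with b | b
    · rfl
    · simpa using hright (Sum.inl a) b
    · simpa using hleft a (Sum.inl b)
    · simpa using hleft a (Sum.inr b)
  -- symmetry and PSD of A i
  have hAtrans : ∀ i, (A i)ᵀ = A i := by
    intro i
    simp only [hAdef, Matrix.transpose_mul, Matrix.transpose_transpose, hNsymm,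
      Matrix.mul_assoc]
  have hAsym : ∀ i, (A i).IsSymm ∧ (A i).PosSemidef := by
    intro i
    refine ⟨hAtrans i, ?_⟩
    have hrepr : A i = (Cᵀ * Z i) * (Cᵀ * Z i)ᴴ := by
      rw [Matrix.conjTranspose_eq_transpose_of_trivial, Matrix.transpose_mul,
        Matrix.transpose_transpose, hAdef]
      simp [Matrix.mul_assoc]
    rw [hrepr]
    exact Matrix.posSemidef_self_mul_conjTranspose _
  -- positive definiteness of the sum
  have hsumZ : ∑ i, Z i * (Z i)ᵀ = Zb * Zbᵀ := by
    ext x y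
    rw [Matrix.sum_apply]
    rw [show (Zb * Zbᵀ) x y = ∑ p : (i : Fin r) × Fin (k i), Zb x p * Zb y p by
      simp [Matrix.mul_apply]]
    rw [← Finset.univ_sigma_univ, Finset.sum_sigma]
    exact Finset.sum_congr rfl fun i _ => by simp [Matrix.mul_apply, hZbdef]
  have hsumA : ∑ i, A i = (Cᵀ * Zb) * (Cᵀ * Zb)ᵀ := by
    have h1 : ∑ i, A i = Cᵀ * (∑ i, Z i * (Z i)ᵀ) * C := by
      rw [Matrix.mul_sum, Matrix.sum_mul]
    rw [h1, hsumZ, Matrix.transpose_mul, Matrix.transpose_transpose]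
    simp [Matrix.mul_assoc]
  have hsumApd : (∑ i, A i).PosDef := by
    rw [Matrix.posDef_iff_dotProduct_mulVec]
    constructor
    · rw [Matrix.IsHermitian, Matrix.conjTranspose_eq_transpose_of_trivial]
      rw [show (∑ i, A i)ᵀ = ∑ i, (A i)ᵀ by simp [Matrix.transpose_sum]]
      exact Finset.sum_congr rfl fun i _ => hAtrans i
    · intro x hx
      have hstar : star x = x := by funext j; simp
      rw [hstar, hsumA]
      set u : EuclideanSpace ℝ (Fin n) := ∑ j, x j • v (Sum.inl j) with hudef
      have hCx : C *ᵥ x = e u := by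
        funext a
        rw [hudef, map_sum]
        rw [show (∑ j, e (x j • v (Sum.inl j))) a = ∑ j, (e (x j • v (Sum.inl j))) a from
          Finset.sum_apply a Finset.univ _]
        rw [show (C *ᵥ x) a = ∑ j, v (Sum.inl j) a * x j from by
          simp [Matrix.mulVec, dotProduct, hCdef, hUdef]]
        exact Finset.sum_congr rfl fun j _ => mul_comm _ _
      have huS : u ∈ S := Submodule.sum_mem S fun j _ => Submodule.smul_mem S _ (hv₁S j)
      have hune : u ≠ 0 := by
        intro hu0
        have hlin := hv.linearIndependent.comp Sum.inl Sum.inl_injective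
        rw [hudef] at hu0
        have hx0 : ∀ j, x j = 0 :=
          Fintype.linearIndependent_iff.mp hlin x (by simpa [Function.comp] using hu0)
        exact hx (funext hx0)
      have hZtw0 : Zbᵀ *ᵥ (e u) ≠ 0 := by
        intro h0
        obtain ⟨c, hc⟩ := (hmemS u).mp huS
        have hz : e u ⬝ᵥ e u = 0 := by
          calc e u ⬝ᵥ e u = (Zb *ᵥ c) ⬝ᵥ (Zb *ᵥ c) := by rw [hc]
            _ = ((Zb *ᵥ c) ᵥ* Zb) ⬝ᵥ c := Matrix.dotProduct_mulVec _ _ _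
            _ = (Zbᵀ *ᵥ (Zb *ᵥ c)) ⬝ᵥ c := by rw [Matrix.mulVec_transpose]
            _ = 0 := by rw [hc, h0, zero_dotProduct]
        have : e u = 0 := dotProduct_self_eq_zero.mp hz
        exact hune (by simpa using e.injective (by simpa using this))
      have hvec : (Cᵀ * Zb)ᵀ *ᵥ x = Zbᵀ *ᵥ (e u) := by
        rw [Matrix.transpose_mul, Matrix.transpose_transpose, ← Matrix.mulVec_mulVec, hCx]
      rw [show ((Cᵀ * Zb) * (Cᵀ * Zb)ᵀ) *ᵥ x = (Cᵀ * Zb) *ᵥ ((Cᵀ * Zb)ᵀ *ᵥ x) from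
        (Matrix.mulVec_mulVec _ _ _).symm]
      rw [Matrix.dotProduct_mulVec, ← Matrix.mulVec_transpose, hvec]
      have hnn : (0 : ℝ) ≤ (Zbᵀ *ᵥ (e u)) ⬝ᵥ (Zbᵀ *ᵥ (e u)) :=
        Finset.sum_nonneg fun a _ => mul_self_nonneg _
      rcases lt_or_eq_of_le hnn with h | h
      · exact h
      · exact absurd (dotProduct_self_eq_zero.mp h.symm) hZtw0
  refine ⟨U, A, hUUt, hUtU, hAsym, hsumApd, ?_⟩
  intro κ hκ
  have hM : Uᵀ * Vtilde Z κ * U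
      = Matrix.fromBlocks (1 + ∑ i, κ i • A i) 0 0 (1 : Matrix (Fin (n - q)) (Fin (n - q)) ℝ) := by
    rw [show Vtilde Z κ = 1 + ∑ i, κ i • (Z i * (Z i)ᵀ) from rfl]
    rw [Matrix.mul_add, Matrix.add_mul, Matrix.mul_one, hUtU]
    have hS2 : Uᵀ * (∑ i, κ i • (Z i * (Z i)ᵀ)) * U
        = ∑ i, κ i • (Uᵀ * (Z i * (Z i)ᵀ) * U) := by
      rw [Matrix.mul_sum, Matrix.sum_mul]
      exact Finset.sum_congr rfl fun i _ => by
        rw [Matrix.mul_smul, Matrix.smul_mul]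
    rw [hS2]
    have hS3 : ∑ i, κ i • (Uᵀ * (Z i * (Z i)ᵀ) * U)
        = Matrix.fromBlocks (∑ i, κ i • A i) 0 0 (0 : Matrix (Fin (n - q)) (Fin (n - q)) ℝ) := by
      rw [Finset.sum_congr rfl fun i _ => by rw [hblock i]]
      ext j j'
      rcases j with a | a <;> rcases j' with b | b <;>
        simp [Matrix.sum_apply, Matrix.fromBlocks]
    rw [hS3, ← Matrix.fromBlocks_one, Matrix.fromBlocks_add]
    simp
  calc Vtilde Z κ = (U * Uᵀ) * Vtilde Z κ * (U * Uᵀ) := by rw [hUUt, Matrix.one_mul, Matrix.mul_one]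
    _ = U * (Uᵀ * Vtilde Z κ * U) * Uᵀ := by simp only [Matrix.mul_assoc]
    _ = _ := by rw [hM]
end

section
/- Let V be a symmetric positive definite n×n matrix, y ∈ ℝⁿ, X an n×m matrix, and P the orthogonal projection onto the orthogonal complement of M(X) + M(Z), where Z is n×k. If the quadratic form satisfies V⁻¹ ⪰ c·P for some c > 0 in the sense that (y − Xβ)'V⁻¹(y − Xβ) ≥ y'Py for all β, then in particular for V = Ṽ(κ) = I + Σκᵢ ZᵢZᵢ' one has (y − Xβ)'Ṽ(κ)⁻¹(y − Xβ) ≥ y'P_{(H+M)^⊥} y for all β ∈ ℝᵐ and all κ ∈ [0,∞)^r. -/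
open Matrix Filter
open scoped RealInnerProductSpace

set_option linter.unnecessarySimpa false in
lemma Vtilde_posDef {n r : ℕ} {k : Fin r → ℕ}
    (Z : ∀ i : Fin r, Matrix (Fin n) (Fin (k i)) ℝ) (κ : Fin r → ℝ)
    (hκ : ∀ i, 0 ≤ κ i) : (Vtilde Z κ).PosDef := by
  have hsumPSD : (∑ i, κ i • (Z i * (Z i)ᵀ)).PosSemidef := by
    refine Finset.sum_induction (fun i => κ i • (Z i * (Z i)ᵀ)) Matrix.PosSemidef
      (fun A B hA hB => hA.add hB) Matrix.PosSemidef.zero (fun i _ => ?_)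
    have hZZ : (Z i * (Z i)ᵀ).PosSemidef := by
      simpa using Matrix.posSemidef_self_mul_conjTranspose (Z i)
    have h : (Z i * (Z i)ᵀ)ᵀ = Z i * (Z i)ᵀ := by simpa using hZZ.1
    refine Matrix.PosSemidef.of_dotProduct_mulVec_nonneg ?_ ?_
    · simp [Matrix.IsHermitian, conjTranspose_smul, h]
    · intro x
      simp only [smul_mulVec, dotProduct_smul]
      exact smul_nonneg (hκ i) (hZZ.dotProduct_mulVec_nonneg x)
  exact Matrix.PosDef.add_posSemidef Matrix.PosDef.one hsumPSD

/-- For all `β` and all `κ ≥ 0`, the quadratic form `(y − Xβ)ᵀ Ṽ(κ)⁻¹ (y − Xβ)` is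
bounded below by `yᵀ P_{(H+M)ᗮ} y = s_{X,Z}`, the squared norm of the orthogonal
projection of `y` onto the orthogonal complement of `M(X) + M(Z)`. -/
theorem quadForm_ge_sXZ
    (n m r : ℕ) (k : Fin r → ℕ)
    (X : Matrix (Fin n) (Fin m) ℝ) (Z : ∀ i : Fin r, Matrix (Fin n) (Fin (k i)) ℝ)
    (y : Fin n → ℝ) :
    ∀ (β : Fin m → ℝ) (κ : Fin r → ℝ), (∀ i, 0 ≤ κ i) →
      sXZ X Z y ≤
        (y - X.mulVec β) ⬝ᵥ (Vtilde Z κ)⁻¹.mulVec (y - X.mulVec β) := by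
  intro β κ hκ
  classical
  set L : EuclideanSpace ℝ (Fin n) ≃ₗ[ℝ] (Fin n → ℝ) :=
    WithLp.linearEquiv 2 ℝ (Fin n → ℝ) with hL
  set S : Submodule ℝ (EuclideanSpace ℝ (Fin n)) :=
    (colSpaceXZ X Z).map L.symm.toLinearMap with hS
  set p' : EuclideanSpace ℝ (Fin n) :=
    (Submodule.orthogonalProjectionOnto Sᗮ (L.symm y) : EuclideanSpace ℝ (Fin n)) with hp'
  set p : Fin n → ℝ := L p' with hp
  -- membership facts
  have hpS : p' ∈ Sᗮ := SetLike.coe_mem _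
  have hdot : ∀ u : Fin n → ℝ, u ∈ colSpaceXZ X Z → p ⬝ᵥ u = 0 := by
    intro u hu
    have hmem : L.symm u ∈ S := ⟨u, hu, rfl⟩
    have hmemO : L.symm u ∈ Sᗮᗮ := Submodule.le_orthogonal_orthogonal S hmem
    have h0 : (inner ℝ p' (L.symm u) : ℝ) = 0 :=
      (Submodule.mem_orthogonal Sᗮ (L.symm u)).mp hmemO p' hpS
    rw [EuclideanSpace.inner_eq_star_dotProduct] at h0
    exact (dotProduct_comm _ _).trans h0
  -- Z_i^T p = 0
  have hZp : ∀ i, (Z i)ᵀ.mulVec p = 0 := by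
    intro i
    funext j
    have hcol : (Z i).mulVec (Pi.single j 1) ∈ colSpaceXZ X Z :=
      Submodule.mem_sup_right (Submodule.mem_iSup_of_mem i ⟨Pi.single j 1, rfl⟩)
    have := hdot _ hcol
    simp only [dotProduct, Matrix.mulVec_single, MulOpposite.op_one, one_smul, mul_one] at this
    simp only [Matrix.mulVec, dotProduct, Matrix.transpose_apply, Pi.zero_apply]
    rw [← this]
    exact Finset.sum_congr rfl fun l _ => mul_comm _ _
  have hV : (Vtilde Z κ).PosDef := Vtilde_posDef Z κ hκ
  have hVinv : (Vtilde Z κ)⁻¹.PosDef := hV.inv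
  have hdet : IsUnit (Vtilde Z κ).det := hV.det_pos.ne'.isUnit
  -- V p = p
  have hterm : ∀ i, (κ i • (Z i * (Z i)ᵀ)) *ᵥ p = 0 := fun i => by
    rw [smul_mulVec, ← Matrix.mulVec_mulVec, hZp, Matrix.mulVec_zero, smul_zero]
  have hsum0 : (∑ i, κ i • (Z i * (Z i)ᵀ)) *ᵥ p = 0 := by
    funext j
    have hterm' : ∀ i : Fin r, ((κ i • (Z i * (Z i)ᵀ)) *ᵥ p) j = 0 := fun i => by
      rw [hterm]; rfl
    have step : ((∑ i, κ i • (Z i * (Z i)ᵀ)) *ᵥ p) j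
        = ∑ i, ((κ i • (Z i * (Z i)ᵀ)) *ᵥ p) j := by
      simp only [Matrix.mulVec, dotProduct, Matrix.sum_apply, Finset.sum_mul]
      rw [Finset.sum_comm]
    rw [step]
    simp [hterm']
  have hVp : (Vtilde Z κ).mulVec p = p := by
    simp only [Vtilde]
    rw [Matrix.add_mulVec, Matrix.one_mulVec, hsum0, add_zero]
  have hVinvp : (Vtilde Z κ)⁻¹.mulVec p = p := by
    conv_lhs => rw [← hVp, Matrix.mulVec_mulVec, Matrix.nonsing_inv_mul _ hdet, Matrix.one_mulVec]
  have hsym : ((Vtilde Z κ)⁻¹)ᵀ = (Vtilde Z κ)⁻¹ := (show (Vtilde Z κ)⁻¹.IsSymm by simpa using hVinv.isHermitian).eq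
  -- decomposition
  set w : Fin n → ℝ := (y - X.mulVec β) - p with hw
  have hpw : p ⬝ᵥ w = 0 := by
    have h1 : L.symm y - p' ∈ Sᗮᗮ := Submodule.sub_starProjection_mem_orthogonal (K := Sᗮ) (L.symm y)
    have h2 : L.symm (X.mulVec β) ∈ Sᗮᗮ := by
      exact Submodule.le_orthogonal_orthogonal S ⟨X.mulVec β, Submodule.mem_sup_left ⟨β, rfl⟩, rfl⟩
    have h3 : L.symm w ∈ Sᗮᗮ := by
      have : L.symm w = (L.symm y - p') - L.symm (X.mulVec β) := by
        simp [hw, map_sub]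
        abel
      rw [this]
      exact Submodule.sub_mem _ h1 h2
    have h0 : (inner ℝ p' (L.symm w) : ℝ) = 0 :=
      (Submodule.mem_orthogonal Sᗮ (L.symm w)).mp h3 p' hpS
    rw [EuclideanSpace.inner_eq_star_dotProduct] at h0
    exact (dotProduct_comm _ _).trans h0
  have hvdecomp : y - X.mulVec β = p + w := by simp [hw]
  have hsnorm : sXZ X Z y = p ⬝ᵥ p := by
    have h1 : (inner ℝ p' p' : ℝ) = p ⬝ᵥ p := by
      rw [EuclideanSpace.inner_eq_star_dotProduct]
      simp only [hp]
      rfl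
    rw [sXZ]
    rw [← real_inner_self_eq_norm_sq]
    exact h1
  have hpAw : p ⬝ᵥ (Vtilde Z κ)⁻¹.mulVec w = 0 := by
    rw [Matrix.dotProduct_mulVec, ← Matrix.mulVec_transpose, hsym, hVinvp]
    exact hpw
  have hwAp : w ⬝ᵥ (Vtilde Z κ)⁻¹.mulVec p = 0 := by
    rw [hVinvp, dotProduct_comm]
    exact hpw
  have hwAw : 0 ≤ w ⬝ᵥ (Vtilde Z κ)⁻¹.mulVec w := by
    have := hVinv.posSemidef.dotProduct_mulVec_nonneg w
    simpa using this
  rw [hvdecomp, hsnorm]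
  rw [add_dotProduct, Matrix.mulVec_add, dotProduct_add, dotProduct_add,
    hpAw, hwAp, hVinvp]
  linarith
end

section
/- If y ∉ M(X,Z), then the function (β,κ₀,κ) ↦ l̃(β,κ₀,κ,y) = n log κ₀ + log det Ṽ(κ) + κ₀⁻¹(y−Xβ)'Ṽ(κ)⁻¹(y−Xβ) attains its infimum on ℝᵐ × (0,∞) × [0,∞)^r; i.e., the maximum likelihood estimate exists. -/
open Matrix Filter

/-! ### Auxiliary lemmas -/

section DMaux

open scoped MatrixOrder

set_option linter.unusedSectionVars false

variable {N : Type*} [Fintype N] [DecidableEq N]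

lemma DM.dot_self_nonneg (v : N → ℝ) : 0 ≤ v ⬝ᵥ v :=
  Finset.sum_nonneg fun _ _ => mul_self_nonneg _

lemma DM.psd_smul {M : Matrix N N ℝ} (hM : M.PosSemidef) {c : ℝ} (hc : 0 ≤ c) :
    (c • M).PosSemidef := by
  refine .of_dotProduct_mulVec_nonneg ?_ fun x => ?_
  · unfold Matrix.IsHermitian
    rw [conjTranspose_smul, hM.1]
    simp
  · simp only [Matrix.smul_mulVec, dotProduct_smul, smul_eq_mul]
    exact mul_nonneg hc (hM.dotProduct_mulVec_nonneg x)

lemma DM.one_add_sum_le_prod {ι : Type*} (s : Finset ι) (f : ι → ℝ)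
    (hf : ∀ i ∈ s, 0 ≤ f i) : 1 + ∑ i ∈ s, f i ≤ ∏ i ∈ s, (1 + f i) := by
  classical
  induction s using Finset.cons_induction with
  | empty => simp
  | cons a s ha ih =>
    rw [Finset.sum_cons, Finset.prod_cons]
    have h0 : 0 ≤ f a := hf a (Finset.mem_cons_self a s)
    have hs : ∀ i ∈ s, 0 ≤ f i := fun i hi => hf i (Finset.mem_cons_of_mem hi)
    have hsum : 0 ≤ ∑ i ∈ s, f i := Finset.sum_nonneg hs
    calc 1 + (f a + ∑ i ∈ s, f i) ≤ (1 + f a) * (1 + ∑ i ∈ s, f i) := by nlinarith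
    _ ≤ (1 + f a) * ∏ i ∈ s, (1 + f i) := by nlinarith [ih hs]

lemma DM.det_one_add_ge {A : Matrix N N ℝ} (hA : A.PosSemidef) :
    1 + A.trace ≤ (1 + A).det := by
  have hH := hA.1
  set U : Matrix N N ℝ := (hH.eigenvectorUnitary : Matrix N N ℝ) with hU
  have hUU : U * star U = 1 := mem_unitaryGroup_iff.mp hH.eigenvectorUnitary.2
  have hUU' : star U * U = 1 := mem_unitaryGroup_iff'.mp hH.eigenvectorUnitary.2
  have hspec : A = U * diagonal (RCLike.ofReal ∘ hH.eigenvalues) * star U :=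
    hH.spectral_theorem
  have hdiag : (RCLike.ofReal ∘ hH.eigenvalues : N → ℝ) = hH.eigenvalues := by
    simp [RCLike.ofReal_real_eq_id]
  rw [hdiag] at hspec
  have h1A : 1 + A = U * diagonal (fun i => 1 + hH.eigenvalues i) * star U := by
    have hD : (diagonal (fun i => 1 + hH.eigenvalues i) : Matrix N N ℝ)
        = 1 + diagonal hH.eigenvalues := by
      rw [← diagonal_one, diagonal_add]
    rw [hD, mul_add, add_mul, mul_one, hUU, ← hspec]
  have hdet : (1 + A).det = ∏ i, (1 + hH.eigenvalues i) := by
    rw [h1A, det_mul, det_mul, mul_comm, ← mul_assoc, ← det_mul, hUU', det_one, one_mul,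
      det_diagonal]
  have htr : A.trace = ∑ i, hH.eigenvalues i := by
    have h2 := congrArg Matrix.trace hspec
    rw [trace_mul_cycle, hUU', one_mul, trace_diagonal] at h2
    exact h2
  rw [hdet, htr]
  exact DM.one_add_sum_le_prod _ _ fun i _ => hA.eigenvalues_nonneg i

lemma DM.cs_dot (u w : N → ℝ) : (w ⬝ᵥ u) ^ 2 ≤ (w ⬝ᵥ w) * (u ⬝ᵥ u) := by
  have h := Finset.sum_mul_sq_le_sq_mul_sq Finset.univ w u
  simpa [dotProduct, pow_two] using h

lemma DM.dot_mulVec_symm {M : Matrix N N ℝ} (hM : Mᵀ = M) (a b : N → ℝ) :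
    a ⬝ᵥ M *ᵥ b = (M *ᵥ a) ⬝ᵥ b := by
  rw [Matrix.dotProduct_mulVec, ← mulVec_transpose, hM]

lemma DM.inv_quad_ge {B : Matrix N N ℝ} (hB : B.PosDef) {C : ℝ} (hC : 0 < C)
    (x : N → ℝ) (hq : x ⬝ᵥ B *ᵥ x ≤ C * (x ⬝ᵥ x)) :
    (x ⬝ᵥ x) / C ≤ x ⬝ᵥ B⁻¹ *ᵥ x := by
  have hP := hB.posSemidef
  set S := CFC.sqrt B with hSdef
  have hSS : S * S = B := CFC.sqrt_mul_sqrt_self B hP.nonneg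
  have hSH : Sᵀ = S := by
    rw [← conjTranspose_eq_transpose_of_trivial]
    exact (CFC.sqrt_nonneg B).posSemidef.1
  have hdet : IsUnit S.det := by
    have hBdet : 0 < B.det := hB.det_pos
    rw [← hSS, det_mul] at hBdet
    exact isUnit_iff_ne_zero.mpr (by intro h; rw [h] at hBdet; simpa using hBdet)
  have hSinvT : S⁻¹ᵀ = S⁻¹ := by rw [transpose_nonsing_inv, hSH]
  have hBinv : B⁻¹ = S⁻¹ * S⁻¹ := by rw [← hSS, Matrix.mul_inv_rev]
  set u := S⁻¹ *ᵥ x with hu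
  set w := S *ᵥ x with hw
  have hxSu : S *ᵥ u = x := by
    rw [hu, Matrix.mulVec_mulVec, mul_nonsing_inv _ hdet, one_mulVec]
  have h1 : x ⬝ᵥ B⁻¹ *ᵥ x = u ⬝ᵥ u := by
    rw [hBinv, ← Matrix.mulVec_mulVec, DM.dot_mulVec_symm hSinvT, ← hu]
  have h2 : x ⬝ᵥ B *ᵥ x = w ⬝ᵥ w := by
    rw [← hSS, ← Matrix.mulVec_mulVec, DM.dot_mulVec_symm hSH, ← hw]
  have h3 : w ⬝ᵥ u = x ⬝ᵥ x := by
    rw [hw, ← DM.dot_mulVec_symm hSH, hxSu]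
  have hcs := DM.cs_dot u w
  rw [h3, ← h1] at hcs
  rw [h2] at hq
  have ha : 0 ≤ x ⬝ᵥ x := DM.dot_self_nonneg x
  have hb : 0 ≤ x ⬝ᵥ B⁻¹ *ᵥ x := by rw [h1]; exact DM.dot_self_nonneg u
  rcases eq_or_lt_of_le ha with h0 | h0
  · rw [← h0]; simpa using hb
  · rw [div_le_iff₀ hC]
    nlinarith [hcs, hq, h0, hb]

end DMaux

section DMV

set_option linter.unusedSectionVars false

variable {n r : ℕ} {k : Fin r → ℕ} (Z : ∀ i : Fin r, Matrix (Fin n) (Fin (k i)) ℝ)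

noncomputable def tZ (i : Fin r) : ℝ := ∑ j, ∑ l, (Z i j l)^2

lemma tZ_nonneg (i : Fin r) : 0 ≤ tZ Z i :=
  Finset.sum_nonneg fun _ _ => Finset.sum_nonneg fun _ _ => sq_nonneg _

lemma Z_eq_zero_of_tZ {i : Fin r} (h : tZ Z i = 0) : Z i = 0 := by
  ext j l
  have hnn : ∀ j' ∈ Finset.univ, (0:ℝ) ≤ ∑ l', (Z i j' l')^2 :=
    fun _ _ => Finset.sum_nonneg fun _ _ => sq_nonneg _
  have h1 := (Finset.sum_eq_zero_iff_of_nonneg hnn).mp h j (Finset.mem_univ _)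
  have h2 := (Finset.sum_eq_zero_iff_of_nonneg
    (fun _ _ => sq_nonneg _)).mp h1 l (Finset.mem_univ _)
  simpa using sq_eq_zero_iff.mp h2

lemma psdZZ (i : Fin r) : (Z i * (Z i)ᵀ).PosSemidef := by
  have := posSemidef_self_mul_conjTranspose (Z i)
  rwa [conjTranspose_eq_transpose_of_trivial] at this

lemma psdA {κ : Fin r → ℝ} (hκ : ∀ i, 0 ≤ κ i) :
    (∑ i, κ i • (Z i * (Z i)ᵀ)).PosSemidef := by
  refine Finset.sum_induction _ (fun M : Matrix (Fin n) (Fin n) ℝ => M.PosSemidef)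
    (fun a b ha hb => ha.add hb) Matrix.PosSemidef.zero
    (fun i _ => DM.psd_smul (psdZZ Z i) (hκ i))

lemma posDefV {κ : Fin r → ℝ} (hκ : ∀ i, 0 ≤ κ i) : (Vtilde Z κ).PosDef :=
  Matrix.PosDef.one.add_posSemidef (psdA Z hκ)

lemma traceA (κ : Fin r → ℝ) :
    (∑ i, κ i • (Z i * (Z i)ᵀ)).trace = ∑ i, κ i * tZ Z i := by
  rw [trace_sum]
  refine Finset.sum_congr rfl fun i _ => ?_
  rw [trace_smul, smul_eq_mul]
  congr 1
  simp only [Matrix.trace, Matrix.diag, Matrix.mul_apply, Matrix.transpose_apply, tZ, pow_two]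

lemma detV_ge {κ : Fin r → ℝ} (hκ : ∀ i, 0 ≤ κ i) :
    1 + ∑ i, κ i * tZ Z i ≤ (Vtilde Z κ).det := by
  have h := DM.det_one_add_ge (psdA Z hκ)
  rw [traceA] at h
  exact h

lemma sumkt_nonneg {κ : Fin r → ℝ} (hκ : ∀ i, 0 ≤ κ i) :
    0 ≤ ∑ i, κ i * tZ Z i :=
  Finset.sum_nonneg fun i _ => mul_nonneg (hκ i) (tZ_nonneg Z i)

lemma detV_ge_one {κ : Fin r → ℝ} (hκ : ∀ i, 0 ≤ κ i) : 1 ≤ (Vtilde Z κ).det := by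
  have := detV_ge Z hκ
  have h0 := sumkt_nonneg Z hκ
  linarith

lemma quad_ZZ_le (i : Fin r) (x : Fin n → ℝ) :
    x ⬝ᵥ (Z i * (Z i)ᵀ) *ᵥ x ≤ tZ Z i * (x ⬝ᵥ x) := by
  have hg : x ⬝ᵥ (Z i * (Z i)ᵀ) *ᵥ x = ((Z i)ᵀ *ᵥ x) ⬝ᵥ ((Z i)ᵀ *ᵥ x) := by
    rw [← Matrix.mulVec_mulVec, Matrix.dotProduct_mulVec, ← Matrix.mulVec_transpose]
  have key : ∀ l, (((Z i)ᵀ *ᵥ x) l) ^ 2 ≤ (∑ j, (Z i j l)^2) * (x ⬝ᵥ x) := by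
    intro l
    have h := Finset.sum_mul_sq_le_sq_mul_sq Finset.univ (fun j => Z i j l) x
    simpa [Matrix.mulVec, dotProduct, pow_two] using h
  rw [hg]
  calc ((Z i)ᵀ *ᵥ x) ⬝ᵥ ((Z i)ᵀ *ᵥ x) = ∑ l, (((Z i)ᵀ *ᵥ x) l)^2 := by
        simp [dotProduct, pow_two]
    _ ≤ ∑ l, (∑ j, (Z i j l)^2) * (x ⬝ᵥ x) := Finset.sum_le_sum fun l _ => key l
    _ = tZ Z i * (x ⬝ᵥ x) := by rw [← Finset.sum_mul, tZ, Finset.sum_comm]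

lemma sum_mulVec' {ι : Type*} (s : Finset ι) (M : ι → Matrix (Fin n) (Fin n) ℝ)
    (x : Fin n → ℝ) : (∑ i ∈ s, M i) *ᵥ x = ∑ i ∈ s, M i *ᵥ x := by
  classical
  induction s using Finset.cons_induction with
  | empty => simp [Matrix.zero_mulVec]
  | cons a s ha ih => rw [Finset.sum_cons, Finset.sum_cons, Matrix.add_mulVec, ih]

lemma dot_sum' {ι : Type*} (s : Finset ι) (v : ι → (Fin n → ℝ)) (x : Fin n → ℝ) :
    x ⬝ᵥ (∑ i ∈ s, v i) = ∑ i ∈ s, x ⬝ᵥ v i := by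
  classical
  induction s using Finset.cons_induction with
  | empty => simp
  | cons a s ha ih => rw [Finset.sum_cons, Finset.sum_cons, dotProduct_add, ih]

lemma quadV_le {κ : Fin r → ℝ} (hκ : ∀ i, 0 ≤ κ i) (x : Fin n → ℝ) :
    x ⬝ᵥ (Vtilde Z κ) *ᵥ x ≤ (1 + ∑ i, κ i * tZ Z i) * (x ⬝ᵥ x) := by
  have hexp : x ⬝ᵥ (Vtilde Z κ) *ᵥ x
      = x ⬝ᵥ x + ∑ i, κ i * (x ⬝ᵥ (Z i * (Z i)ᵀ) *ᵥ x) := by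
    rw [Vtilde, Matrix.add_mulVec, Matrix.one_mulVec, dotProduct_add, sum_mulVec',
      dot_sum']
    congr 1
    refine Finset.sum_congr rfl fun i _ => ?_
    rw [Matrix.smul_mulVec, dotProduct_smul, smul_eq_mul]
  rw [hexp, add_mul, one_mul]
  have hsum : ∑ i, κ i * (x ⬝ᵥ (Z i * (Z i)ᵀ) *ᵥ x) ≤ ∑ i, κ i * (tZ Z i * (x ⬝ᵥ x)) :=
    Finset.sum_le_sum fun i _ =>
      mul_le_mul_of_nonneg_left (quad_ZZ_le (Z := Z) i x) (hκ i)
  have hr : ∑ i, κ i * (tZ Z i * (x ⬝ᵥ x)) = (∑ i, κ i * tZ Z i) * (x ⬝ᵥ x) := by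
    rw [Finset.sum_mul]
    exact Finset.sum_congr rfl fun i _ => (mul_assoc _ _ _).symm
  linarith [hsum, hr.le]

lemma Vtilde_congr {κ κ' : Fin r → ℝ} (h : ∀ i, κ i = κ' i ∨ Z i = 0) :
    Vtilde Z κ = Vtilde Z κ' := by
  unfold Vtilde
  congr 1
  refine Finset.sum_congr rfl fun i _ => ?_
  rcases h i with h | h
  · rw [h]
  · rw [h]; simp

end DMV

lemma DM.log_ineq {a d : ℝ} (ha : 0 < a) (hd : 0 < d) :
    Real.log d + 1 ≤ Real.log a + d / a := by
  have h := Real.log_le_sub_one_of_pos (div_pos hd ha)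
  rw [Real.log_div hd.ne' ha.ne'] at h
  linarith

lemma proj_bounds {n m r : ℕ} {k : Fin r → ℕ}
    (X : Matrix (Fin n) (Fin m) ℝ) (Z : ∀ i : Fin r, Matrix (Fin n) (Fin (k i)) ℝ)
    (y : Fin n → ℝ) (hy : y ∉ colSpaceXZ X Z) :
    ∃ w : Fin n → ℝ, (∀ i, (Z i)ᵀ *ᵥ w = 0) ∧ (∀ u ∈ colSpaceXZ X Z, u ⬝ᵥ w = 0)
      ∧ (y - w) ∈ colSpaceXZ X Z ∧ w ⬝ᵥ w = sXZ X Z y ∧ 0 < sXZ X Z y := by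
  classical
  set L : EuclideanSpace ℝ (Fin n) ≃ₗ[ℝ] (Fin n → ℝ) :=
    WithLp.linearEquiv 2 ℝ (Fin n → ℝ) with hL
  set S : Submodule ℝ (EuclideanSpace ℝ (Fin n)) :=
    (colSpaceXZ X Z).map L.symm.toLinearMap with hS
  set w0 : EuclideanSpace ℝ (Fin n) :=
    (Submodule.orthogonalProjectionOnto Sᗮ (L.symm y) : EuclideanSpace ℝ (Fin n)) with hw0
  have hsXZ : sXZ X Z y = ‖w0‖ ^ 2 := rfl
  set w : Fin n → ℝ := L w0 with hw
  have hLw : L.symm w = w0 := L.symm_apply_apply w0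
  have hdot : ∀ u v : Fin n → ℝ, (inner ℝ (L.symm u) (L.symm v) : ℝ) = u ⬝ᵥ v := by
    intro u v
    rw [PiLp.inner_apply]
    simp [hL, dotProduct, mul_comm]
  have hw0mem : w0 ∈ Sᗮ := SetLike.coe_mem _
  have horth : ∀ u ∈ colSpaceXZ X Z, u ⬝ᵥ w = 0 := by
    intro u hu
    have huS : L.symm u ∈ S := Submodule.mem_map_of_mem hu
    have := (Submodule.mem_orthogonal S w0).mp hw0mem (L.symm u) huS
    rwa [← hLw, hdot] at this
  have hZw : ∀ i, (Z i)ᵀ *ᵥ w = 0 := by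
    intro i
    funext l
    have hcol : (Z i) *ᵥ Pi.single l 1 ∈ colSpaceXZ X Z := by
      refine Submodule.mem_sup_right ?_
      exact Submodule.mem_iSup_of_mem i ⟨Pi.single l 1, rfl⟩
    have h0 := horth _ hcol
    have hc : ((Z i) *ᵥ Pi.single l 1) = fun j => Z i j l := by
      funext j
      simp [Matrix.mulVec_single]
    rw [hc] at h0
    simpa [Matrix.mulVec, dotProduct] using h0
  have hyw : (y - w) ∈ colSpaceXZ X Z := by
    have hmem : L.symm y - w0 ∈ Sᗮᗮ := Submodule.sub_starProjection_mem_orthogonal (K := Sᗮ) _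
    rw [Submodule.orthogonal_orthogonal] at hmem
    obtain ⟨u, hu, hueq⟩ := hmem
    have heq : u = y - w := by
      have h' : L.symm u = L.symm y - w0 := hueq
      have h2 := congrArg L h'
      rwa [L.apply_symm_apply, map_sub, L.apply_symm_apply, ← hw] at h2
    rwa [← heq]
  have hww : w ⬝ᵥ w = sXZ X Z y := by
    rw [hsXZ, ← real_inner_self_eq_norm_sq, ← hLw, hdot]
  have hspos : 0 < sXZ X Z y := by
    rcases lt_or_eq_of_le (sq_nonneg ‖w0‖) with h | h
    · rwa [hsXZ]
    · exfalso
      have hw0z : w0 = 0 := norm_eq_zero.mp (sq_eq_zero_iff.mp h.symm)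
      apply hy
      have h3 := hyw
      rw [hw, hw0z, map_zero, sub_zero] at h3
      exact h3
  exact ⟨w, hZw, horth, hyw, hww, hspos⟩

set_option maxHeartbeats 2000000 in
/-- Sufficiency in Theorem 3.1 of Demidenko–Massam: if `y ∉ M(X,Z)`, the ML estimate
exists, i.e. `l̃` attains its infimum on `ℝᵐ × (0,∞) × [0,∞)^r`. -/
theorem mle_exists_of_not_mem
    (n m r : ℕ) (k : Fin r → ℕ) (hmn : m < n) (hk : ∑ i, k i < n)
    (X : Matrix (Fin n) (Fin m) ℝ) (hX : X.rank = m)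
    (Z : ∀ i : Fin r, Matrix (Fin n) (Fin (k i)) ℝ)
    (y : Fin n → ℝ) (hy : y ∉ colSpaceXZ X Z) :
    ∃ (β : Fin m → ℝ) (κ₀ : ℝ) (κ : Fin r → ℝ), 0 < κ₀ ∧ (∀ i, 0 ≤ κ i) ∧
      ∀ (β' : Fin m → ℝ) (κ₀' : ℝ) (κ' : Fin r → ℝ), 0 < κ₀' → (∀ i, 0 ≤ κ' i) →
        ltilde X Z y β κ₀ κ ≤ ltilde X Z y β' κ₀' κ' := by
  classical
  obtain ⟨w, hZw, horth, hyw, hww, hspos⟩ := proj_bounds X Z y hy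
  set s := sXZ X Z y with hs
  have hn0 : 0 < (n:ℝ) := by
    have : 0 < n := lt_of_le_of_lt (Nat.zero_le m) hmn
    exact_mod_cast this
  set v : (Fin m → ℝ) → (Fin n → ℝ) := fun β => y - X *ᵥ β with hv
  set T : (Fin r → ℝ) → ℝ := fun κ => ∑ i, κ i * tZ Z i with hT
  set Q : (Fin m → ℝ) → (Fin r → ℝ) → ℝ :=
    fun β κ => (v β) ⬝ᵥ (Vtilde Z κ)⁻¹ *ᵥ (v β) with hQ
  have hltilde : ∀ β κ₀ κ, ltilde X Z y β κ₀ κ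
      = (n:ℝ) * Real.log κ₀ + Real.log (Vtilde Z κ).det + κ₀⁻¹ * Q β κ := by
    intro β κ₀ κ
    rfl
  -- Q is at least s
  have hQs : ∀ β κ, (∀ i, 0 ≤ κ i) → s ≤ Q β κ := by
    intro β κ hκ
    have hV : (Vtilde Z κ).PosDef := posDefV Z hκ
    have hVdet : IsUnit (Vtilde Z κ).det := hV.isUnit.map detMonoidHom
    have hVinv : (Vtilde Z κ)⁻¹.PosDef := hV.inv
    have hVinvT : ((Vtilde Z κ)⁻¹)ᵀ = (Vtilde Z κ)⁻¹ := by
      rw [← conjTranspose_eq_transpose_of_trivial]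
      exact hVinv.isHermitian
    have hVw : (Vtilde Z κ) *ᵥ w = w := by
      rw [Vtilde, Matrix.add_mulVec, Matrix.one_mulVec, sum_mulVec']
      have hzero : ∀ i ∈ Finset.univ, (κ i • (Z i * (Z i)ᵀ)) *ᵥ w = 0 := by
        intro i _
        rw [Matrix.smul_mulVec, ← Matrix.mulVec_mulVec, hZw i, Matrix.mulVec_zero,
          smul_zero]
      rw [Finset.sum_congr rfl hzero]
      simp
    have hVinvw : (Vtilde Z κ)⁻¹ *ᵥ w = w := by
      conv_lhs => rw [← hVw]
      rw [Matrix.mulVec_mulVec, Matrix.nonsing_inv_mul _ hVdet, Matrix.one_mulVec]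
    set p : Fin n → ℝ := v β - w with hp
    have hpw : p ⬝ᵥ w = 0 := by
      have hpmem : p ∈ colSpaceXZ X Z := by
        have h1 : v β = (y - w) - (X *ᵥ β - w) := by simp only [hv]; abel
        have : p = (y - w) - X *ᵥ β := by rw [hp]; simp only [hv]; abel
        rw [this]
        exact Submodule.sub_mem _ hyw (Submodule.mem_sup_left ⟨β, rfl⟩)
      exact horth p hpmem
    have hvpw : v β = p + w := by rw [hp]; abel
    have hquad : Q β κ = p ⬝ᵥ (Vtilde Z κ)⁻¹ *ᵥ p + w ⬝ᵥ w := by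
      rw [hQ]
      simp only
      rw [hvpw, Matrix.mulVec_add, hVinvw, dotProduct_add, add_dotProduct,
        add_dotProduct]
      have hterm1 : p ⬝ᵥ w = 0 := hpw
      have hterm2 : w ⬝ᵥ (Vtilde Z κ)⁻¹ *ᵥ p = 0 := by
        rw [DM.dot_mulVec_symm hVinvT, hVinvw, dotProduct_comm]
        exact hpw
      rw [hterm1, hterm2]
      ring
    have hppos : 0 ≤ p ⬝ᵥ (Vtilde Z κ)⁻¹ *ᵥ p := by
      have := hVinv.posSemidef.dotProduct_mulVec_nonneg p
      simpa using this
    rw [hquad, ← hww]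
    linarith
  have hQ0 : ∀ β κ, (∀ i, 0 ≤ κ i) → 0 ≤ Q β κ :=
    fun β κ hκ => le_trans hspos.le (hQs β κ hκ)
  -- upper bound for v⬝v in terms of Q
  have hvQ : ∀ β κ, (∀ i, 0 ≤ κ i) → (v β) ⬝ᵥ (v β) ≤ (1 + T κ) * Q β κ := by
    intro β κ hκ
    have hC : 0 < 1 + T κ := by
      have := sumkt_nonneg Z hκ
      rw [hT]
      linarith
    have h := DM.inv_quad_ge (posDefV Z hκ) hC (v β) (quadV_le Z hκ (v β))
    rw [div_le_iff₀ hC] at h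
    calc (v β) ⬝ᵥ (v β) ≤ Q β κ * (1 + T κ) := h
      _ = (1 + T κ) * Q β κ := mul_comm _ _
  -- reference value
  set L : ℝ := y ⬝ᵥ y with hLdef
  have hL0 : ltilde X Z y 0 1 0 = L := by
    have hV0 : Vtilde Z (0 : Fin r → ℝ) = 1 := by
      unfold Vtilde
      simp
    rw [ltilde, hV0]
    simp [inv_one, hLdef]
  -- scalar inequality
  set d : ℝ := s / (2 * n) with hd
  have hdpos : 0 < d := div_pos hspos (by linarith)
  have hbase : ∀ a : ℝ, 0 < a →
      (n:ℝ) * (Real.log d + 1) + s / (2*a) ≤ (n:ℝ) * Real.log a + s / a := by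
    intro a ha
    have h1 : Real.log d + 1 ≤ Real.log a + d / a := DM.log_ineq ha hdpos
    have h2 : (n:ℝ) * (Real.log d + 1) ≤ (n:ℝ) * (Real.log a + d / a) :=
      mul_le_mul_of_nonneg_left h1 hn0.le
    have h3 : (n:ℝ) * (Real.log a + d / a) = (n:ℝ) * Real.log a + s / (2*a) := by
      rw [hd]
      field_simp
    have h4 : s / a = s / (2*a) + s / (2*a) := by ring
    linarith
  -- constants
  set L₁ : ℝ := max (L - (n:ℝ)*(Real.log d + 1)) 1 with hL₁
  have hL₁pos : 0 < L₁ := lt_of_lt_of_le one_pos (le_max_right _ _)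
  set ε : ℝ := s / (2*L₁) with hε
  have hεpos : 0 < ε := div_pos hspos (by linarith)
  set C₀ : ℝ := Real.exp (L / n) with hC₀
  set TL : ℝ := max (Real.exp (L - (n:ℝ) * Real.log ε) - 1) 0 with hTL
  have hTL0 : 0 ≤ TL := le_max_right _ _
  set c : Fin r → ℝ := fun i => if tZ Z i = 0 then 0 else TL / tZ Z i with hcdef
  have hc0 : ∀ i, 0 ≤ c i := by
    intro i
    rw [hcdef]
    by_cases h : tZ Z i = 0
    · simp [h]
    · have ht : 0 < tZ Z i := lt_of_le_of_ne (tZ_nonneg Z i) (Ne.symm h)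
      simp only [if_neg h]
      positivity
  set QL : ℝ := C₀ * (L - (n:ℝ) * Real.log ε) with hQL
  set R2 : ℝ := (1 + TL) * QL with hR2
  -- antilipschitz constant for X
  have hker : LinearMap.ker X.mulVecLin = ⊥ := by
    have h1 := LinearMap.finrank_range_add_finrank_ker X.mulVecLin
    rw [Module.finrank_fin_fun] at h1
    have h2 : Module.finrank ℝ (LinearMap.range X.mulVecLin) = m := hX
    rw [h2] at h1
    have h3 : Module.finrank ℝ (LinearMap.ker X.mulVecLin) = 0 := by omega
    exact Submodule.finrank_eq_zero.mp h3
  obtain ⟨Ka, hKapos, hanti⟩ := X.mulVecLin.exists_antilipschitzWith hker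
  have hbetabound : ∀ β : Fin m → ℝ, ‖β‖ ≤ (Ka:ℝ) * ‖X *ᵥ β‖ := by
    intro β
    have h := hanti.le_mul_dist β 0
    rw [dist_zero_right, map_zero, dist_zero_right] at h
    simpa [Matrix.mulVecLin_apply] using h
  set Cβ : ℝ := (Ka:ℝ) * (‖y‖ + Real.sqrt R2) with hCβ
  -- the compact box and the key membership lemma
  set f : (Fin m → ℝ) × ℝ × (Fin r → ℝ) → ℝ :=
    fun p => ltilde X Z y p.1 p.2.1 p.2.2 with hf
  set Bset : Set ((Fin m → ℝ) × ℝ × (Fin r → ℝ)) :=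
    {p | ε ≤ p.2.1 ∧ ∀ i, 0 ≤ p.2.2 i} with hBdef
  set Kbox : Set ((Fin m → ℝ) × ℝ × (Fin r → ℝ)) :=
    Metric.closedBall (0 : Fin m → ℝ) Cβ ×ˢ
      (Set.Icc ε C₀ ×ˢ Set.univ.pi fun i => Set.Icc 0 (c i)) with hKboxdef
  set K : Set ((Fin m → ℝ) × ℝ × (Fin r → ℝ)) :=
    Kbox ∩ (Bset ∩ f ⁻¹' Set.Iic L) with hKdef
  have key : ∀ (β' : Fin m → ℝ) (κ₀' : ℝ) (κ' : Fin r → ℝ), 0 < κ₀' → (∀ i, 0 ≤ κ' i) →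
      (∀ i, tZ Z i = 0 → κ' i = 0) → ltilde X Z y β' κ₀' κ' ≤ L →
      (β', κ₀', κ') ∈ K := by
    intro β' κ₀' κ' h0 hκ hnorm hfL
    have hdet1 : 1 ≤ (Vtilde Z κ').det := detV_ge_one Z hκ
    have hlogdet : 0 ≤ Real.log (Vtilde Z κ').det := Real.log_nonneg hdet1
    have hQs' := hQs β' κ' hκ
    have hQ0' := hQ0 β' κ' hκ
    have hfexp : (n:ℝ) * Real.log κ₀' + Real.log (Vtilde Z κ').det
        + κ₀'⁻¹ * Q β' κ' ≤ L := by
      rw [← hltilde]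
      exact hfL
    have hinvpos : 0 < κ₀'⁻¹ := inv_pos.mpr h0
    -- κ₀ lower bound
    have hsk : s / κ₀' ≤ κ₀'⁻¹ * Q β' κ' := by
      rw [div_eq_inv_mul]
      exact mul_le_mul_of_nonneg_left hQs' hinvpos.le
    have h1 : (n:ℝ) * Real.log κ₀' + s / κ₀' ≤ L := by linarith
    have h2 := hbase κ₀' h0
    have h3 : s / (2*κ₀') ≤ L₁ := by
      have hx : s/(2*κ₀') ≤ L - (n:ℝ)*(Real.log d + 1) := by linarith
      exact le_trans hx (le_max_left _ _)
    have hκ₀ε : ε ≤ κ₀' := by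
      rw [hε, div_le_iff₀ (by linarith : (0:ℝ) < 2*L₁)]
      rw [div_le_iff₀ (by linarith : (0:ℝ) < 2*κ₀')] at h3
      nlinarith
    -- κ₀ upper bound
    have hQterm : 0 ≤ κ₀'⁻¹ * Q β' κ' := mul_nonneg hinvpos.le hQ0'
    have hlogκ₀ : (n:ℝ) * Real.log κ₀' ≤ L := by linarith
    have hκ₀C₀ : κ₀' ≤ C₀ := by
      rw [hC₀, ← Real.exp_log h0]
      apply Real.exp_le_exp.mpr
      have hcomm : Real.log κ₀' * (n:ℝ) = (n:ℝ) * Real.log κ₀' := mul_comm _ _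
      rw [le_div_iff₀ hn0, hcomm]
      exact hlogκ₀
    -- T bound
    have hlogε : Real.log ε ≤ Real.log κ₀' := Real.log_le_log hεpos hκ₀ε
    have hnlogε : (n:ℝ) * Real.log ε ≤ (n:ℝ) * Real.log κ₀' :=
      mul_le_mul_of_nonneg_left hlogε hn0.le
    have hdetT : 1 + T κ' ≤ (Vtilde Z κ').det := by
      simp only [hT]
      exact detV_ge Z hκ
    have hTnn : 0 ≤ T κ' := by
      simp only [hT]
      exact sumkt_nonneg Z hκ
    have hTpos : 0 < 1 + T κ' := by linarith
    have hlogT : Real.log (1 + T κ') ≤ Real.log (Vtilde Z κ').det :=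
      Real.log_le_log hTpos hdetT
    have hlogTL : Real.log (1 + T κ') ≤ L - (n:ℝ)*Real.log ε := by linarith
    have hTκTL : T κ' ≤ TL := by
      have hexp : 1 + T κ' ≤ Real.exp (L - (n:ℝ)*Real.log ε) := by
        rw [← Real.exp_log hTpos]
        exact Real.exp_le_exp.mpr hlogTL
      have hx : T κ' ≤ Real.exp (L - (n:ℝ)*Real.log ε) - 1 := by linarith
      exact le_trans hx (le_max_left _ _)
    have hκc : ∀ i, κ' i ∈ Set.Icc 0 (c i) := by
      intro i
      refine ⟨hκ i, ?_⟩
      by_cases hti : tZ Z i = 0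
      · rw [hnorm i hti, hcdef]
        simp [hti]
      · have ht : 0 < tZ Z i := lt_of_le_of_ne (tZ_nonneg Z i) (Ne.symm hti)
        have hsingle : κ' i * tZ Z i ≤ T κ' := by
          simp only [hT]
          exact Finset.single_le_sum (f := fun j => κ' j * tZ Z j)
            (fun j _ => mul_nonneg (hκ j) (tZ_nonneg Z j)) (Finset.mem_univ i)
        rw [hcdef]
        simp only [if_neg hti]
        rw [le_div_iff₀ ht]
        linarith
    -- Q ≤ QL
    have hLε0 : 0 ≤ L - (n:ℝ)*Real.log ε := le_trans hQterm (by linarith)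
    have hQle : κ₀'⁻¹ * Q β' κ' ≤ L - (n:ℝ)*Real.log ε := by linarith
    have hQQL : Q β' κ' ≤ QL := by
      have hQeq : Q β' κ' = κ₀' * (κ₀'⁻¹ * Q β' κ') := by
        rw [← mul_assoc, mul_inv_cancel₀ h0.ne', one_mul]
      have step1 : κ₀' * (κ₀'⁻¹ * Q β' κ') ≤ κ₀' * (L - (n:ℝ)*Real.log ε) :=
        mul_le_mul_of_nonneg_left hQle h0.le
      have step2 : κ₀' * (L - (n:ℝ)*Real.log ε) ≤ C₀ * (L - (n:ℝ)*Real.log ε) :=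
        mul_le_mul_of_nonneg_right hκ₀C₀ hLε0
      rw [hQeq, hQL]
      linarith
    have hQLnn : 0 ≤ QL := le_trans hQ0' hQQL
    -- v bound and β bound
    have hvv : (v β') ⬝ᵥ (v β') ≤ R2 := by
      have hq1 := hvQ β' κ' hκ
      have ha : (1 + T κ') * Q β' κ' ≤ (1 + TL) * Q β' κ' :=
        mul_le_mul_of_nonneg_right (by linarith) hQ0'
      have hb : (1 + TL) * Q β' κ' ≤ (1 + TL) * QL :=
        mul_le_mul_of_nonneg_left hQQL (by linarith)
      rw [hR2]
      linarith
    have hvnorm : ‖v β'‖ ≤ Real.sqrt R2 := by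
      rw [pi_norm_le_iff_of_nonneg (Real.sqrt_nonneg _)]
      intro j
      have hj : (v β' j)^2 ≤ (v β') ⬝ᵥ (v β') := by
        rw [pow_two]
        exact Finset.single_le_sum (f := fun j => v β' j * v β' j)
          (fun j _ => mul_self_nonneg _) (Finset.mem_univ j)
      have hjR : (v β' j)^2 ≤ R2 := le_trans hj hvv
      rw [Real.norm_eq_abs, ← Real.sqrt_sq_eq_abs]
      exact Real.sqrt_le_sqrt hjR
    have hXβ : X *ᵥ β' = y - v β' := by
      rw [hv]
      simp
    have hβnorm : ‖β'‖ ≤ Cβ := by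
      have hb1 := hbetabound β'
      rw [hXβ] at hb1
      have hb2 : ‖y - v β'‖ ≤ ‖y‖ + ‖v β'‖ := norm_sub_le _ _
      rw [hCβ]
      calc ‖β'‖ ≤ (Ka:ℝ) * ‖y - v β'‖ := hb1
        _ ≤ (Ka:ℝ) * (‖y‖ + Real.sqrt R2) :=
          mul_le_mul_of_nonneg_left (by linarith) (by positivity)
    refine ⟨⟨?_, ?_, ?_⟩, ⟨hκ₀ε, hκ⟩, ?_⟩
    · exact mem_closedBall_zero_iff.mpr hβnorm
    · exact ⟨hκ₀ε, hκ₀C₀⟩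
    · exact Set.mem_univ_pi.mpr hκc
    · exact hfL
  -- continuity of f on Bset
  have hVcont : Continuous (fun p : (Fin m → ℝ) × ℝ × (Fin r → ℝ) => Vtilde Z p.2.2) := by
    simp only [Vtilde]
    exact continuous_const.add (continuous_finset_sum _ fun i _ =>
      (((continuous_apply i).comp (continuous_snd.comp continuous_snd)).smul continuous_const))
  have hdetcont : Continuous
      (fun p : (Fin m → ℝ) × ℝ × (Fin r → ℝ) => (Vtilde Z p.2.2).det) := hVcont.matrix_det
  have hvcont : Continuous (fun p : (Fin m → ℝ) × ℝ × (Fin r → ℝ) => y - X *ᵥ p.1) :=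
    continuous_const.sub (continuous_const.matrix_mulVec continuous_fst)
  have hdotc : Continuous (fun q : (Matrix (Fin n) (Fin n) ℝ) × (Fin n → ℝ) =>
      q.2 ⬝ᵥ q.1 *ᵥ q.2) :=
    continuous_snd.dotProduct (continuous_fst.matrix_mulVec continuous_snd)
  have hfc : ContinuousOn f Bset := by
    intro p hp
    have hκ0 : 0 < p.2.1 := lt_of_lt_of_le hεpos hp.1
    have hκnn : ∀ i, 0 ≤ p.2.2 i := hp.2
    have hdpos : 0 < (Vtilde Z p.2.2).det := (posDefV Z hκnn).det_pos
    apply ContinuousAt.continuousWithinAt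
    have hWat : ContinuousAt
        (fun p : (Fin m → ℝ) × ℝ × (Fin r → ℝ) => (Vtilde Z p.2.2)⁻¹) p := by
      have hinv : ContinuousAt Inv.inv (Vtilde Z p.2.2) := by
        apply continuousAt_matrix_inv
        rw [Ring.inverse_eq_inv']
        exact continuousAt_inv₀ hdpos.ne'
      have h := ContinuousAt.comp (f := fun p : (Fin m → ℝ) × ℝ × (Fin r → ℝ) => Vtilde Z p.2.2) hinv hVcont.continuousAt
      simpa [Function.comp_def] using h
    have hQat : ContinuousAt (fun p : (Fin m → ℝ) × ℝ × (Fin r → ℝ) =>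
        (y - X *ᵥ p.1) ⬝ᵥ (Vtilde Z p.2.2)⁻¹ *ᵥ (y - X *ᵥ p.1)) p := by
      have h := ContinuousAt.comp hdotc.continuousAt (hWat.prodMk hvcont.continuousAt)
      simpa [Function.comp_def] using h
    have hsndfst : Continuous (fun p : (Fin m → ℝ) × ℝ × (Fin r → ℝ) => p.2.1) :=
      continuous_snd.fst
    have hlogκ : ContinuousAt
        (fun p : (Fin m → ℝ) × ℝ × (Fin r → ℝ) => Real.log p.2.1) p := by
      have h := ContinuousAt.comp (f := fun p : (Fin m → ℝ) × ℝ × (Fin r → ℝ) => p.2.1) (Real.continuousAt_log hκ0.ne') hsndfst.continuousAt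
      simpa [Function.comp_def] using h
    have hlogdetat : ContinuousAt
        (fun p : (Fin m → ℝ) × ℝ × (Fin r → ℝ) => Real.log (Vtilde Z p.2.2).det) p := by
      have h := ContinuousAt.comp (f := fun p : (Fin m → ℝ) × ℝ × (Fin r → ℝ) => (Vtilde Z p.2.2).det) (Real.continuousAt_log hdpos.ne') hdetcont.continuousAt
      simpa [Function.comp_def] using h
    have hinvκ : ContinuousAt
        (fun p : (Fin m → ℝ) × ℝ × (Fin r → ℝ) => (p.2.1)⁻¹) p := by
      have h := ContinuousAt.comp (f := fun p : (Fin m → ℝ) × ℝ × (Fin r → ℝ) => p.2.1) (continuousAt_inv₀ hκ0.ne') hsndfst.continuousAt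
      simpa [Function.comp_def] using h
    have hall : ContinuousAt (fun p : (Fin m → ℝ) × ℝ × (Fin r → ℝ) =>
        (n:ℝ) * Real.log p.2.1 + Real.log (Vtilde Z p.2.2).det
        + (p.2.1)⁻¹ * ((y - X *ᵥ p.1) ⬝ᵥ (Vtilde Z p.2.2)⁻¹ *ᵥ (y - X *ᵥ p.1))) p :=
      ((continuousAt_const.mul hlogκ).add hlogdetat).add (hinvκ.mul hQat)
    exact hall
  -- compactness
  have hBclosed : IsClosed Bset := by
    have hBeq : Bset = {p : (Fin m → ℝ) × ℝ × (Fin r → ℝ) | ε ≤ p.2.1}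
        ∩ ⋂ i, {p : (Fin m → ℝ) × ℝ × (Fin r → ℝ) | 0 ≤ p.2.2 i} := by
      ext p
      simp [hBdef, Set.mem_iInter]
    rw [hBeq]
    exact (isClosed_le continuous_const (continuous_fst.comp continuous_snd)).inter
      (isClosed_iInter fun i => isClosed_le continuous_const
        ((continuous_apply i).comp (continuous_snd.comp continuous_snd)))
  have hKboxcpt : IsCompact Kbox := (isCompact_closedBall _ _).prod
    ((isCompact_Icc).prod (isCompact_univ_pi fun i => isCompact_Icc))
  have hCclosed : IsClosed (Bset ∩ f ⁻¹' Set.Iic L) :=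
    hfc.preimage_isClosed_of_isClosed hBclosed isClosed_Iic
  have hKcpt : IsCompact K := hKboxcpt.inter_right hCclosed
  have hfx0 : ltilde X Z y 0 1 0 ≤ L := le_of_eq hL0
  have hx0K : ((0 : Fin m → ℝ), (1:ℝ), (0 : Fin r → ℝ)) ∈ K :=
    key 0 1 0 one_pos (fun i => le_refl 0) (fun i _ => rfl) hfx0
  have hKsub : K ⊆ Bset := fun p hp => hp.2.1
  obtain ⟨q, hqK, hqmin⟩ := hKcpt.exists_isMinOn ⟨_, hx0K⟩ (hfc.mono hKsub)
  have hmin' := isMinOn_iff.mp hqmin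
  simp only [hf] at hmin'
  have hqB : q ∈ Bset := hKsub hqK
  refine ⟨q.1, q.2.1, q.2.2, lt_of_lt_of_le hεpos hqB.1, hqB.2, ?_⟩
  intro β' κ₀' κ' h0' hκ'
  set κ'' : Fin r → ℝ := fun i => if tZ Z i = 0 then 0 else κ' i with hκ''
  have hκ''nn : ∀ i, 0 ≤ κ'' i := by
    intro i
    rw [hκ'']
    by_cases h : tZ Z i = 0 <;> simp [h, hκ' i]
  have hκ''norm : ∀ i, tZ Z i = 0 → κ'' i = 0 := by
    intro i h
    rw [hκ'']
    simp [h]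
  have hVeq : Vtilde Z κ'' = Vtilde Z κ' := by
    apply Vtilde_congr
    intro i
    by_cases h : tZ Z i = 0
    · exact Or.inr (Z_eq_zero_of_tZ Z h)
    · refine Or.inl ?_
      rw [hκ'']
      simp [h]
  have hleq : ltilde X Z y β' κ₀' κ'' = ltilde X Z y β' κ₀' κ' := by
    unfold ltilde
    rw [hVeq]
  rw [← hleq]
  rcases le_or_gt (ltilde X Z y β' κ₀' κ'') L with hc1 | hc1
  · have hmem := key β' κ₀' κ'' h0' hκ''nn hκ''norm hc1
    exact hmin' _ hmem
  · have h1 : ltilde X Z y q.1 q.2.1 q.2.2 ≤ ltilde X Z y 0 1 0 := hmin' _ hx0K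
    rw [hL0] at h1
    exact le_trans h1 hc1.le
end
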